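/- Assume μ satisfies condition C. Then the stationary law η (the law of R = Q₁ + Σ_{k≥1} M₁⋯Mₖ Q_{k+1}) has no atoms and gives measure zero to every proper affine subspace of V. -/

import Mathlib

open MeasureTheory ProbabilityTheory Filter Topology Complex
open scoped ENNReal NNReal

noncomputable section

/-- `Vd d` is the vector space `V = ℝ^d` with its Euclidean structure. -/
abbrev Vd (d : ℕ) := EuclideanSpace ℝ (Fin d)

/-- Continuous linear endomorphisms of `V`; the multiplicative part of affine maps
lives here (invertibility is imposed via hypotheses). -/
abbrev Ld (d : ℕ) := Vd d →L[ℝ] Vd d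

/-- The affine group `H = V ⋊ G` is modelled as pairs `(b, g)` acting by `x ↦ g x + b`. -/
abbrev Hd (d : ℕ) := Vd d × Ld d

variable {d : ℕ}

/-- Action of an affine map `h = (b, g)` on `V` : `h x = g x + b`. -/
def aff (h : Hd d) (x : Vd d) : Vd d := h.2 x + h.1

/-- Transpose (adjoint) of `g ∈ G`. -/
def adjL (g : Ld d) : Ld d := ContinuousLinearMap.adjoint g

/-- Support of a measure: points all of whose open neighbourhoods have positive measure. -/
def msupp {X : Type*} [TopologicalSpace X] [MeasurableSpace X] (ρ : Measure X) : Set X :=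
  {x | ∀ U : Set X, IsOpen U → x ∈ U → ρ U ≠ 0}

/-- The closed sub-semigroup `[supp ρ]` generated by the support of a measure `ρ` on `G`. -/
def suppSG (ρ : Measure (Ld d)) : Set (Ld d) :=
  closure ((Subsemigroup.closure (msupp ρ) : Subsemigroup (Ld d)) : Set (Ld d))

/-- `g` is proximal : it has a real dominant algebraically simple eigenvalue `lam`,
with an invariant complement on which `g` has spectral radius `< |lam|`. -/
def IsProximal (g : Ld d) : Prop :=
  ∃ (lam : ℝ) (u : Vd d) (W : Submodule ℝ (Vd d)), lam ≠ 0 ∧ u ≠ 0 ∧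
    g u = lam • u ∧ (∀ w ∈ W, g w ∈ W) ∧
    Submodule.span ℝ {u} ⊔ W = ⊤ ∧ Submodule.span ℝ {u} ⊓ W = ⊥ ∧
    ∃ C r : ℝ, 0 ≤ r ∧ r < |lam| ∧ ∀ (n : ℕ), ∀ w ∈ W, ‖(g ^ n) w‖ ≤ C * r ^ n * ‖w‖

/-- A set `Γ ⊂ G` is strongly irreducible if no finite union of proper nonzero
subspaces of `V` is `Γ`-invariant. -/
def StronglyIrreducible (Γ : Set (Ld d)) : Prop :=
  ∀ S : Finset (Submodule ℝ (Vd d)), S.Nonempty → (∀ W ∈ S, W ≠ ⊥ ∧ W ≠ ⊤) →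
    ∃ g ∈ Γ, ∃ W ∈ S, ∃ x ∈ W, ∀ W' ∈ S, g x ∉ (W' : Set (Vd d))

/-- `Γ` satisfies condition i-p: strong irreducibility plus a proximal element. -/
def ConditionIP (Γ : Set (Ld d)) : Prop :=
  StronglyIrreducible Γ ∧ ∃ g ∈ Γ, IsProximal g

/-- Iterated lower integral computing `𝔼 f(Mₙ ⋯ M₁ g)` for `(Qᵢ,Mᵢ)` i.i.d. of law `μ`. -/
def prodLint (μ : Measure (Hd d)) (f : Ld d → ℝ≥0∞) : ℕ → Ld d → ℝ≥0∞
  | 0, g => f g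
  | n + 1, g => ∫⁻ h, prodLint μ f n (h.2 * g) ∂μ

/-- Iterated (Bochner) integral computing `𝔼 f(Mₙ ⋯ M₁ g)`. -/
def prodInt (μ : Measure (Hd d)) (f : Ld d → ℝ) : ℕ → Ld d → ℝ
  | 0, g => f g
  | n + 1, g => ∫ h, prodInt μ f n (h.2 * g) ∂μ

/-- `(𝔼 ‖Mₙ ⋯ M₁‖ˢ)^(1/n)`, whose limit is `κ(s)`. -/
def kappaApprox (μ : Measure (Hd d)) (s : ℝ) (n : ℕ) : ℝ≥0∞ :=
  (prodLint μ (fun g => (‖g‖₊ : ℝ≥0∞) ^ s) n 1) ^ (1 / (n : ℝ))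

/-- `(1/n) 𝔼 log ‖Mₙ ⋯ M₁‖`, whose limit is the top Lyapunov exponent `L(μ̄)`. -/
def lyapApprox (μ : Measure (Hd d)) (n : ℕ) : ℝ :=
  (1 / (n : ℝ)) * prodInt μ (fun g => Real.log ‖g‖) n 1

/-- Condition `C` of Guivarc'h–Le Page for the measure `μ` on `H = V ⋊ G`, with the
function `κ` and the exponent `α` (`κ(α) = 1`). -/
structure ConditionC (d : ℕ) (μ : Measure (Hd d)) (α : ℝ) (κ : ℝ → ℝ≥0∞) : Prop where
  prob : IsProbabilityMeasure μ
  /- C1 : condition i-p for `[supp μ̄]` -/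
  ip : ConditionIP (suppSG (μ.map Prod.snd))
  /- `κ(s)` is the limit of `(𝔼‖Mₙ⋯M₁‖ˢ)^{1/n}` -/
  hκ : ∀ s : ℝ, 0 ≤ s → Tendsto (fun n => kappaApprox μ s n) atTop (𝓝 (κ s))
  /- C2 : negative top Lyapunov exponent -/
  lyap_neg : ∃ ℓ : ℝ, ℓ < 0 ∧ Tendsto (fun n => lyapApprox μ n) atTop (𝓝 ℓ)
  /- C2 : `α ∈ (0, s_∞)` is such that `κ(α) = 1` and `lim_{s → s_∞} κ(s) > 1` -/
  alpha_pos : 0 < α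
  kappa_alpha : κ α = 1
  kappa_gt_one : ∃ s : ℝ, α < s ∧ 1 < κ s ∧ κ s < ⊤
  /- C3 : moments of order `α + δ` -/
  moment : ∃ δ : ℝ, 0 < δ ∧
    (∫⁻ h : Hd d, (max ‖h.2‖₊ ‖Ring.inverse h.2‖₊ : ℝ≥0∞) ^ (α + δ)
      + (‖h.1‖₊ : ℝ≥0∞) ^ (α + δ) ∂μ) < ⊤
  ae_invertible : ∀ᵐ h ∂μ, IsUnit h.2
  /- C4 : no fixed point for `supp μ` -/
  no_fixed_point : ∀ x : Vd d, ∃ h ∈ msupp μ, aff h x ≠ x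

variable {Ω : Type*} [MeasurableSpace Ω]

/-- The affine random walk `X₀ˣ = x`, `Xₙ₊₁ˣ = Mₙ₊₁ Xₙˣ + Qₙ₊₁` driven by the
i.i.d. sequence `Y n = (Qₙ₊₁, Mₙ₊₁)`. -/
def Xproc (Y : ℕ → Ω → Hd d) (x : Vd d) : ℕ → Ω → Vd d
  | 0, _ => x
  | n + 1, ω => aff (Y n ω) (Xproc Y x n ω)

/-- Birkhoff sums `Sₙˣ = ∑_{k=0}^n Xₖˣ`. -/
def Sproc (Y : ℕ → Ω → Hd d) (x : Vd d) (n : ℕ) (ω : Ω) : Vd d :=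
  ∑ k ∈ Finset.range (n + 1), Xproc Y x k ω

/-- `prodFwd Y n = M₁ M₂ ⋯ Mₙ` (composition in this order). -/
def prodFwd (Y : ℕ → Ω → Hd d) : ℕ → Ω → Ld d
  | 0, _ => 1
  | n + 1, ω => prodFwd Y n ω * (Y n ω).2

/-- `Rₙ = Q₁ + ∑_{k=1}^{n-1} M₁⋯Mₖ Q_{k+1}`. -/
def Rproc (Y : ℕ → Ω → Hd d) (n : ℕ) (ω : Ω) : Vd d :=
  ∑ k ∈ Finset.range n, prodFwd Y k ω ((Y k ω).1)

/-- The a.s. limit `R` of `Rₙ` (junk value where the limit does not exist). -/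
def Rlim (Y : ℕ → Ω → Hd d) (ω : Ω) : Vd d :=
  limUnder atTop fun n => Rproc Y n ω

/-- `Zₙ* = ∑_{k=1}^n M₁* ⋯ Mₖ*`. -/
def Zstar (Y : ℕ → Ω → Hd d) (n : ℕ) (ω : Ω) : Ld d :=
  ∑ k ∈ Finset.Icc 1 n, (List.ofFn fun i : Fin k => adjL ((Y i ω).2)).prod

/-- The i.i.d. hypothesis: the law of any finite window of `Y` is the product of copies of `μ`. -/
def IsIIDWithLaw (μ : Measure (Hd d)) (Pr : Measure Ω) (Y : ℕ → Ω → Hd d) : Prop :=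
  (∀ n, Measurable (Y n)) ∧
    ∀ n : ℕ, Measure.map (fun ω => fun i : Fin n => Y i ω) Pr = Measure.pi fun _ : Fin n => μ

/-- `η` is a `P`-stationary probability measure for the affine random walk of law `μ`. -/
def IsAffStationary (μ : Measure (Hd d)) (η : Measure (Vd d)) : Prop :=
  IsProbabilityMeasure η ∧
    Measure.map (fun p : Hd d × Vd d => aff p.1 p.2) (μ.prod η) = η

/-- `ρ` is a stationary probability measure of the companion recursion
`Wₙ = Mₙ*(Wₙ₋₁ + v)`. -/
def IsCompanionStationary (μ : Measure (Hd d)) (v : Vd d) (ρ : Measure (Vd d)) : Prop :=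
  IsProbabilityMeasure ρ ∧
    Measure.map (fun p : Hd d × Vd d => adjL p.1.2 (p.2 + v)) (μ.prod ρ) = ρ

/-- Vague convergence on `V ∖ {0}` of `t^{-α} (t.η)` to `Λ` as `t → 0⁺`. -/
def VagueLimitAtZero (η : Measure (Vd d)) (α : ℝ) (Λ : Measure (Vd d)) : Prop :=
  ∀ f : Vd d → ℝ, Continuous f → HasCompactSupport f → (0 : Vd d) ∉ tsupport f →
    Tendsto (fun t : ℝ => (∫ x, f (t • x) ∂η) / t ^ α) (𝓝[>] (0 : ℝ))
      (𝓝 (∫ x, f x ∂Λ))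

/-- `Λ = c · σ ⊗ ℓ^α` where `σ` is a probability measure on the unit sphere and
`ℓ^α(dt) = dt/t^{α+1}`. -/
def IsHomogDecomp (Λ : Measure (Vd d)) (σ : Measure (Vd d)) (α : ℝ) (c : ℝ) : Prop :=
  IsProbabilityMeasure σ ∧ σ {x : Vd d | ‖x‖ = 1}ᶜ = 0 ∧
    ∀ f : Vd d → ℝ, Continuous f → HasCompactSupport f → (0 : Vd d) ∉ tsupport f →
      ∫ x, f x ∂Λ = c * ∫ w, (∫ t in Set.Ioi (0 : ℝ), f (t • w) / t ^ (α + 1)) ∂σ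

/-- `e^{i⟨y, x⟩}`. -/
def eI (y x : Vd d) : ℂ := Complex.exp (Complex.I * ((inner ℝ y x : ℝ) : ℂ))

/-- Characteristic function (Fourier transform) of a measure on `V`. -/
def charFn (ν : Measure (Vd d)) (v : Vd d) : ℂ := ∫ x, eI v x ∂ν

/-- A measure on `V` is fully non-degenerate if it is not supported on a proper
affine subspace. -/
def FullyNonDegenerate (ν : Measure (Vd d)) : Prop :=
  ∀ W : AffineSubspace ℝ (Vd d), (W : Set (Vd d)) ≠ Set.univ → ν (W : Set (Vd d)) < 1

/-- Weighted sup-norm `|f|_θ = sup_x |f(x)|/(1+‖x‖)^θ` (with value in `ℝ≥0∞`). -/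
def wnorm (θ : ℝ) (f : Vd d → ℂ) : ℝ≥0∞ :=
  ⨆ x : Vd d, (‖f x‖₊ : ℝ≥0∞) / ENNReal.ofReal ((1 + ‖x‖) ^ θ)

/-- Hölder seminorm `[f]_{ε,λ} = sup_{x ≠ y} |f(x)-f(y)|/(‖x-y‖^ε (1+‖x‖)^λ (1+‖y‖)^λ)`. -/
def hnorm (ε lam : ℝ) (f : Vd d → ℂ) : ℝ≥0∞ :=
  ⨆ (x : Vd d) (y : Vd d) (_ : x ≠ y),
    (‖f x - f y‖₊ : ℝ≥0∞) /
      ENNReal.ofReal (‖x - y‖ ^ ε * (1 + ‖x‖) ^ lam * (1 + ‖y‖) ^ lam)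

/-- `f ∈ 𝔹_{θ,ε,λ}`. -/
def MemB (θ ε lam : ℝ) (f : Vd d → ℂ) : Prop :=
  Continuous f ∧ wnorm θ f < ⊤ ∧ hnorm ε lam f < ⊤

/-- The Fourier operator `P_v f (x) = ∫ e^{i⟨v, hx⟩} f(hx) dμ(h)`, at the level of
functions. -/
def PvF (μ : Measure (Hd d)) (v : Vd d) (f : Vd d → ℂ) (x : Vd d) : ℂ :=
  ∫ h, eI v (aff h x) * f (aff h x) ∂μ

/-- `n`-fold convolution power of a measure on `V`. -/
def convPow (ν : Measure (Vd d)) : ℕ → Measure (Vd d)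
  | 0 => Measure.dirac 0
  | n + 1 => Measure.map (fun p : Vd d × Vd d => p.1 + p.2) ((convPow ν n).prod ν)

end


noncomputable section AuxProof

open Set

variable {d : ℕ}

lemma continuous_affPair : Continuous (fun p : Hd d × Vd d => aff p.1 p.2) :=
  (isBoundedBilinearMap_apply.continuous.comp
    ((continuous_snd.comp continuous_fst).prodMk continuous_snd)).add
    (continuous_fst.comp continuous_fst)

lemma continuous_aff_left (x : Vd d) : Continuous fun h : Hd d => aff h x :=
  continuous_affPair.comp (continuous_id.prodMk continuous_const)

lemma msupp_subset_of_closed {X : Type*} [TopologicalSpace X] [MeasurableSpace X]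
    (ρ : MeasureTheory.Measure X) {C : Set X} (hC : IsClosed C) (h0 : ρ Cᶜ = 0) :
    msupp ρ ⊆ C := by
  intro x hx
  by_contra hxC
  exact hx Cᶜ hC.isOpen_compl hxC h0

lemma exists_affEquiv (h : Hd d) (hu : IsUnit h.2) :
    ∃ e : Vd d ≃ᵃ[ℝ] Vd d, (∀ x, e x = aff h x) ∧ (∀ v, e.linear v = h.2 v) := by
  obtain ⟨u, hu2⟩ := hu
  have hinvl : ∀ x, (↑u⁻¹ : Ld d) (h.2 x) = x := by
    intro x
    rw [← hu2, ← ContinuousLinearMap.mul_apply, u.inv_mul, ContinuousLinearMap.one_apply]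
  have hinvr : ∀ x, h.2 ((↑u⁻¹ : Ld d) x) = x := by
    intro x
    rw [← hu2, ← ContinuousLinearMap.mul_apply, u.mul_inv, ContinuousLinearMap.one_apply]
  refine ⟨{ toFun := fun x => aff h x
            invFun := fun y => (↑u⁻¹ : Ld d) (y - h.1)
            left_inv := ?_
            right_inv := ?_
            linear :=
            { toFun := h.2
              map_add' := fun a b => map_add h.2 a b
              map_smul' := fun r a => map_smul h.2 r a
              invFun := (↑u⁻¹ : Ld d)
              left_inv := hinvl
              right_inv := hinvr }
            map_vadd' := ?_ }, fun _ => rfl, fun _ => rfl⟩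
  · intro x
    show (↑u⁻¹ : Ld d) (aff h x - h.1) = x
    rw [show aff h x - h.1 = h.2 x by simp [aff]]
    exact hinvl x
  · intro y
    show aff h ((↑u⁻¹ : Ld d) (y - h.1)) = y
    rw [aff, hinvr, sub_add_cancel]
  · intro p v
    show aff h (v +ᵥ p) = h.2 v +ᵥ aff h p
    simp only [vadd_eq_add, aff, map_add]
    abel

lemma coe_map_symm (e : Vd d ≃ᵃ[ℝ] Vd d) (W : AffineSubspace ℝ (Vd d)) :
    ((W.map e.symm.toAffineMap : AffineSubspace ℝ (Vd d)) : Set (Vd d)) = ⇑e ⁻¹' ↑W := by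
  rw [AffineSubspace.coe_map]
  ext x
  constructor
  · rintro ⟨y, hy, rfl⟩
    simpa using hy
  · intro hx
    exact ⟨e x, hx, by simp⟩

lemma finrank_map_symm (e : Vd d ≃ᵃ[ℝ] Vd d) (W : AffineSubspace ℝ (Vd d)) :
    Module.finrank ℝ (W.map e.symm.toAffineMap).direction = Module.finrank ℝ W.direction := by
  rw [AffineSubspace.map_direction]
  rw [show e.symm.toAffineMap.linear = (e.linear.symm : Vd d →ₗ[ℝ] Vd d) by simp]
  exact LinearEquiv.finrank_map_eq e.linear.symm W.direction

lemma mem_dir_map_symm (e : Vd d ≃ᵃ[ℝ] Vd d) (W : AffineSubspace ℝ (Vd d)) (v : Vd d) :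
    v ∈ (W.map e.symm.toAffineMap).direction ↔
      ∃ w ∈ W.direction, e.linear.symm w = v := by
  have hL : ∀ u, e.symm.toAffineMap.linear u = e.linear.symm u := fun u => by simp
  rw [AffineSubspace.map_direction, Submodule.mem_map]
  constructor
  · rintro ⟨w, hw, hweq⟩
    exact ⟨w, hw, by rw [← hweq, hL]⟩
  · rintro ⟨w, hw, hweq⟩
    exact ⟨w, hw, by rw [hL, hweq]⟩

lemma station_apply {μ : MeasureTheory.Measure (Hd d)} {η : MeasureTheory.Measure (Vd d)}
    [MeasureTheory.SFinite μ] [MeasureTheory.SFinite η]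
    (hη : MeasureTheory.Measure.map (fun p : Hd d × Vd d => aff p.1 p.2) (μ.prod η) = η)
    {s : Set (Vd d)} (hs : MeasurableSet s) :
    η s = ∫⁻ h, η ((fun x => aff h x) ⁻¹' s) ∂μ := by
  conv_lhs => rw [← hη]
  rw [MeasureTheory.Measure.map_apply continuous_affPair.measurable hs,
    MeasureTheory.Measure.prod_apply (continuous_affPair.measurable hs)]
  rfl

set_option maxHeartbeats 1000000 in
set_option synthInstance.maxHeartbeats 200000 in
theorem eta_null_proper {d : ℕ} (μ : MeasureTheory.Measure (Hd d))
    (hprob : MeasureTheory.IsProbabilityMeasure μ)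
    (hip : ConditionIP (suppSG (μ.map Prod.snd)))
    (hinv : ∀ᵐ h ∂μ, IsUnit h.2)
    (hnfp : ∀ x : Vd d, ∃ h ∈ msupp μ, aff h x ≠ x)
    (η : MeasureTheory.Measure (Vd d)) (hη : IsAffStationary μ η) :
    ∀ W : AffineSubspace ℝ (Vd d), (W : Set (Vd d)) ≠ Set.univ → η (W : Set (Vd d)) = 0 := by
  classical
  haveI := hprob
  haveI := hη.1
  haveI : MeasureTheory.SFinite μ := inferInstance
  haveI : MeasureTheory.SFinite η := inferInstance
  intro W0 hW0proper
  by_contra hW0pos'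
  have hW0pos : 0 < η ↑W0 := pos_iff_ne_zero.mpr hW0pos'
  have hmeas : ∀ W : AffineSubspace ℝ (Vd d), MeasurableSet (W : Set (Vd d)) :=
    fun W => W.closed_of_finiteDimensional.measurableSet
  have hstat : ∀ W : AffineSubspace ℝ (Vd d),
      η ↑W = ∫⁻ h, η ((fun x => aff h x) ⁻¹' ↑W) ∂μ :=
    fun W => station_apply hη.2 (hmeas W)
  have hne_of_pos : ∀ W : AffineSubspace ℝ (Vd d), 0 < η ↑W → (W : Set (Vd d)).Nonempty := by
    intro W hpos
    rcases Set.eq_empty_or_nonempty (W : Set (Vd d)) with he | hne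
    · rw [he] at hpos; simp at hpos
    · exact hne
  have hQex : ∃ n, ∃ W : AffineSubspace ℝ (Vd d),
      (W : Set (Vd d)) ≠ Set.univ ∧ (W : Set (Vd d)).Nonempty ∧
      Module.finrank ℝ W.direction = n ∧ 0 < η ↑W :=
    ⟨_, W0, hW0proper, hne_of_pos _ hW0pos, rfl, hW0pos⟩
  set k := Nat.find hQex with hkdef
  obtain ⟨W1, hW1prop, hW1ne, hW1rank, hW1pos⟩ := Nat.find_spec hQex
  have hmink : ∀ W : AffineSubspace ℝ (Vd d), (W : Set (Vd d)) ≠ Set.univ →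
      Module.finrank ℝ W.direction < k → η ↑W = 0 := by
    intro W hprop hlt
    by_contra h0
    have hpos : 0 < η ↑W := pos_iff_ne_zero.mpr h0
    exact Nat.find_min hQex hlt ⟨W, hprop, hne_of_pos _ hpos, rfl, hpos⟩
  set P : AffineSubspace ℝ (Vd d) → Prop := fun W =>
    (W : Set (Vd d)) ≠ Set.univ ∧ (W : Set (Vd d)).Nonempty ∧
      Module.finrank ℝ W.direction = k with hPdef
  -- pairwise intersections of distinct P-subspaces are null
  have hint : ∀ W₁ W₂ : AffineSubspace ℝ (Vd d), P W₁ → P W₂ → W₁ ≠ W₂ →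
      η ((W₁ : Set (Vd d)) ∩ ↑W₂) = 0 := by
    intro W₁ W₂ h₁ h₂ hne12
    have hcoe : ((W₁ ⊓ W₂ : AffineSubspace ℝ (Vd d)) : Set (Vd d)) = ↑W₁ ∩ ↑W₂ := rfl
    rcases Set.eq_empty_or_nonempty ((W₁ ⊓ W₂ : AffineSubspace ℝ (Vd d)) : Set (Vd d)) with
      he | hne
    · rw [← hcoe, he]; exact MeasureTheory.measure_empty
    · obtain ⟨x, hx⟩ := hne
      have hx' : x ∈ (W₁ : Set (Vd d)) ∩ ↑W₂ := hcoe ▸ hx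
      have hprop : ((W₁ ⊓ W₂ : AffineSubspace ℝ (Vd d)) : Set (Vd d)) ≠ Set.univ := by
        intro hun
        apply h₁.1
        apply Set.eq_univ_of_univ_subset
        rw [← hun, hcoe]
        exact Set.inter_subset_left
      have hd1 : (W₁ ⊓ W₂).direction ≤ W₁.direction :=
        AffineSubspace.direction_le inf_le_left
      have hlt : Module.finrank ℝ (W₁ ⊓ W₂).direction < k := by
        rcases lt_or_eq_of_le (le_trans (Submodule.finrank_mono hd1) h₁.2.2.le) with hlt' | heq'
        · exact hlt'
        · exfalso
          have he1 : (W₁ ⊓ W₂).direction = W₁.direction :=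
            Submodule.eq_of_le_of_finrank_le hd1 (by rw [h₁.2.2, heq'])
          have h12 : W₁ ⊓ W₂ = W₁ := by
            refine AffineSubspace.ext_of_direction_eq he1 ⟨x, hx, hx'.1⟩
          have hW1le : W₁ ≤ W₂ := by
            rw [← h12]; exact inf_le_right
          have hdle : W₁.direction ≤ W₂.direction := AffineSubspace.direction_le hW1le
          have hdeq : W₁.direction = W₂.direction :=
            Submodule.eq_of_le_of_finrank_le hdle (by rw [h₁.2.2, h₂.2.2])
          exact hne12 (AffineSubspace.ext_of_direction_eq hdeq ⟨x, hx'.1, hx'.2⟩)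
      rw [← hcoe]
      exact hmink _ hprop hlt
  set m : ℝ≥0∞ := ⨆ W : {W : AffineSubspace ℝ (Vd d) // P W}, η ↑W.1 with hmdef
  have hPW1 : P W1 := ⟨hW1prop, hW1ne, hW1rank⟩
  have hm_ge : ∀ W : AffineSubspace ℝ (Vd d), P W → η ↑W ≤ m := fun W hW =>
    le_iSup (fun W : {W : AffineSubspace ℝ (Vd d) // P W} => η ↑W.1) ⟨W, hW⟩
  have hm_pos : 0 < m := lt_of_lt_of_le hW1pos (hm_ge W1 hPW1)
  have hm_le_one : m ≤ 1 := iSup_le fun W => MeasureTheory.prob_le_one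
  have hm_ne_top : m ≠ ⊤ := (lt_of_le_of_lt hm_le_one ENNReal.one_lt_top).ne
  set c := m / 2 with hcdef
  have hc0 : c ≠ 0 := by
    rw [hcdef]
    simp [ENNReal.div_eq_zero_iff, hm_pos.ne']
  have hcT : c ≠ ⊤ := by
    rw [hcdef]
    exact (ENNReal.div_lt_top hm_ne_top (by norm_num)).ne
  set S : Set (AffineSubspace ℝ (Vd d)) := {W | P W ∧ c < η ↑W} with hSdef
  have hSfin : S.Finite := by
    by_contra hinf
    have hinf' : S.Infinite := hinf
    obtain ⟨N, hN⟩ := ENNReal.exists_nat_gt (r := 1 / c)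
      ((ENNReal.div_lt_top ENNReal.one_ne_top hc0).ne)
    obtain ⟨F, hFsub, hFcard⟩ := hinf'.exists_subset_card_eq N
    have hsum : η (⋃ W ∈ F, (W : Set (Vd d))) = ∑ W ∈ F, η ↑W :=
      MeasureTheory.measure_biUnion_finset₀
        (fun W₁ h₁ W₂ h₂ hne12 => hint W₁ W₂ (hFsub h₁).1 (hFsub h₂).1 hne12)
        (fun W _ => (hmeas W).nullMeasurableSet)
    have h1 : (N : ℝ≥0∞) * c ≤ 1 := by
      calc (N : ℝ≥0∞) * c = F.card • c := by rw [hFcard, nsmul_eq_mul]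
        _ ≤ ∑ W ∈ F, η ↑W :=
            Finset.card_nsmul_le_sum F _ c (fun W hW => (hFsub hW).2.le)
        _ = η (⋃ W ∈ F, (W : Set (Vd d))) := hsum.symm
        _ ≤ 1 := MeasureTheory.prob_le_one
    have h2 : 1 < (N : ℝ≥0∞) * c := by
      have h3 := ENNReal.mul_lt_mul_left hc0 hcT hN
      rwa [ENNReal.div_mul_cancel hc0 hcT] at h3
    exact absurd h1 (not_le.mpr h2)
  have hhalf : c < m := ENNReal.half_lt_self hm_pos.ne' hm_ne_top
  have hSne : S.Nonempty := by
    rw [hmdef] at hhalf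
    obtain ⟨⟨W, hPW⟩, hW⟩ := lt_iSup_iff.mp hhalf
    exact ⟨W, hPW, hW⟩
  obtain ⟨Wstar, hWstarF, hWstarmax⟩ :=
    hSfin.toFinset.exists_max_image (fun W => η ↑W) (by rwa [Set.Finite.toFinset_nonempty])
  have hWstarS : Wstar ∈ S := hSfin.mem_toFinset.mp hWstarF
  have hstar_m : η ↑Wstar = m := by
    refine le_antisymm (hm_ge _ hWstarS.1) ?_
    rw [hmdef]
    refine iSup_le ?_
    rintro ⟨W, hPW⟩
    by_cases hc' : c < η ↑W
    · exact hWstarmax W (hSfin.mem_toFinset.mpr ⟨hPW, hc'⟩)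
    · exact le_trans (not_lt.mp hc') hWstarS.2.le
  set A : Set (AffineSubspace ℝ (Vd d)) := {W | P W ∧ η ↑W = m} with hAdef
  have hAsubS : A ⊆ S := fun W hW => ⟨hW.1, hW.2 ▸ hhalf⟩
  have hAfin : A.Finite := hSfin.subset hAsubS
  set A' := hAfin.toFinset with hA'def
  have hmemA' : ∀ W, W ∈ A' ↔ (P W ∧ η ↑W = m) := fun W => hAfin.mem_toFinset
  have hA'ne : A'.Nonempty := ⟨Wstar, (hmemA' _).mpr ⟨hWstarS.1, hstar_m⟩⟩
  -- map of a P-subspace along e.symm is a P-subspace representing the `aff h` preimage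
  have hmapP : ∀ (h : Hd d) (e : Vd d ≃ᵃ[ℝ] Vd d), (∀ x, e x = aff h x) →
      ∀ W : AffineSubspace ℝ (Vd d), P W →
      ((W.map e.symm.toAffineMap : AffineSubspace ℝ (Vd d)) : Set (Vd d))
        = (fun x => aff h x) ⁻¹' ↑W ∧ P (W.map e.symm.toAffineMap) := by
    intro h e he W hPW
    have hpre : ((W.map e.symm.toAffineMap : AffineSubspace ℝ (Vd d)) : Set (Vd d))
        = (fun x => aff h x) ⁻¹' ↑W := by
      rw [coe_map_symm]
      ext x
      simp [he]
    refine ⟨hpre, ?_, ?_, ?_⟩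
    · rw [hpre]
      intro hun
      apply hPW.1
      apply Set.eq_univ_of_forall
      intro y
      have h1 : e.symm y ∈ (fun x => aff h x) ⁻¹' (W : Set (Vd d)) := by
        rw [hun]; trivial
      have h2 : aff h (e.symm y) ∈ (W : Set (Vd d)) := h1
      rwa [← he, e.apply_symm_apply] at h2
    · rw [hpre]
      obtain ⟨x, hx⟩ := hPW.2.1
      refine ⟨e.symm x, ?_⟩
      show aff h (e.symm x) ∈ (W : Set (Vd d))
      rwa [← he, e.apply_symm_apply]
    · rw [finrank_map_symm]
      exact hPW.2.2
  have hae1 : ∀ W ∈ A', ∀ᵐ h ∂μ, η ((fun x => aff h x) ⁻¹' ↑W) = m := by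
    intro W hW
    obtain ⟨hPW, hηW⟩ := (hmemA' W).mp hW
    have hle : (fun h => η ((fun x => aff h x) ⁻¹' (W : Set (Vd d)))) ≤ᵐ[μ] (fun _ => m) := by
      filter_upwards [hinv] with h hu
      obtain ⟨e, he, hel⟩ := exists_affEquiv h hu
      obtain ⟨hpre, hP'⟩ := hmapP h e he W hPW
      calc η ((fun x => aff h x) ⁻¹' (W : Set (Vd d)))
          = η ↑(W.map e.symm.toAffineMap) := by rw [hpre]
        _ ≤ m := hm_ge _ hP'
    have hlint : ∫⁻ h, η ((fun x => aff h x) ⁻¹' (W : Set (Vd d))) ∂μ = m := by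
      rw [← hstat W]; exact hηW
    exact MeasureTheory.ae_eq_of_ae_le_of_lintegral_le hle (by rw [hlint]; exact hm_ne_top)
      aemeasurable_const
      (by rw [hlint, MeasureTheory.lintegral_const, MeasureTheory.measure_univ, mul_one])
  have key : ∀ᵐ h ∂μ, ∃ e : Vd d ≃ᵃ[ℝ] Vd d, (∀ x, e x = aff h x) ∧
      (∀ v, e.linear v = h.2 v) ∧
      Set.BijOn (fun W => W.map e.symm.toAffineMap) (A' : Set (AffineSubspace ℝ (Vd d)))
        (A' : Set (AffineSubspace ℝ (Vd d))) := by
    have haeAll : ∀ᵐ h ∂μ, ∀ W ∈ A', η ((fun x => aff h x) ⁻¹' ↑W) = m :=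
      (Finset.eventually_all A').mpr hae1
    filter_upwards [hinv, haeAll] with h hu hAm
    obtain ⟨e, he, hel⟩ := exists_affEquiv h hu
    refine ⟨e, he, hel, ?_⟩
    have hmapsTo : Set.MapsTo (fun W => W.map e.symm.toAffineMap)
        (A' : Set (AffineSubspace ℝ (Vd d))) (A' : Set (AffineSubspace ℝ (Vd d))) := by
      intro W hW
      obtain ⟨hPW, hηW⟩ := (hmemA' W).mp hW
      obtain ⟨hpre, hP'⟩ := hmapP h e he W hPW
      refine (hmemA' _).mpr ⟨hP', ?_⟩
      rw [hpre]
      exact hAm W hW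
    have hinjOn : Set.InjOn (fun W => W.map e.symm.toAffineMap)
        (A' : Set (AffineSubspace ℝ (Vd d))) := by
      intro W₁ _ W₂ _ hEq
      have hco : ⇑e ⁻¹' (W₁ : Set (Vd d)) = ⇑e ⁻¹' (W₂ : Set (Vd d)) := by
        rw [← coe_map_symm e W₁, ← coe_map_symm e W₂]
        exact congrArg _ hEq
      have hcoe2 : (W₁ : Set (Vd d)) = (W₂ : Set (Vd d)) := by
        have := congrArg (Set.image ⇑e) hco
        rwa [Set.image_preimage_eq _ e.surjective, Set.image_preimage_eq _ e.surjective] at this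
      exact SetLike.coe_injective hcoe2
    exact (A'.finite_toSet.injOn_iff_bijOn_of_mapsTo hmapsTo).mp hinjOn
  by_cases hk0 : k = 0
  · -- each maximizer is a singleton; barycenter is an a.e. fixed point
    set pt : AffineSubspace ℝ (Vd d) → Vd d := fun W =>
      if hW : (W : Set (Vd d)).Nonempty then hW.choose else 0 with hptdef
    have hpt : ∀ W ∈ A', (W : Set (Vd d)) = {pt W} := by
      intro W hW
      obtain ⟨hPW, -⟩ := (hmemA' W).mp hW
      have hne := hPW.2.1
      have hptmem : pt W ∈ (W : Set (Vd d)) := by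
        rw [hptdef]
        simp only [dif_pos hne]
        exact hne.choose_spec
      have hdir : W.direction = ⊥ := by
        have : Module.finrank ℝ W.direction = 0 := by rw [hPW.2.2, hk0]
        exact Submodule.finrank_eq_zero.mp this
      ext y
      constructor
      · intro hy
        have hmem := AffineSubspace.vsub_mem_direction hy hptmem
        rw [hdir, Submodule.mem_bot] at hmem
        have : y - pt W = 0 := hmem
        rw [sub_eq_zero] at this
        simp [this]
      · intro hy
        rw [Set.mem_singleton_iff] at hy
        rw [hy]
        exact hptmem
    set N := A'.card with hNdef
    have hNpos : 0 < N := Finset.card_pos.mpr hA'ne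
    set s0 : Vd d := ∑ W ∈ A', pt W with hs0
    set b : Vd d := (N : ℝ)⁻¹ • s0 with hbdef
    have hfix : ∀ᵐ h ∂μ, aff h b = b := by
      filter_upwards [key] with h hh
      obtain ⟨e, he, hel, hbij⟩ := hh
      have hptmap : ∀ W ∈ A', pt (W.map e.symm.toAffineMap) = e.symm (pt W) := by
        intro W hW
        have h1 := hpt W hW
        have h2 := hpt _ (hbij.mapsTo hW)
        have h3 : ((W.map e.symm.toAffineMap : AffineSubspace ℝ (Vd d)) : Set (Vd d))
            = {e.symm (pt W)} := by
          rw [AffineSubspace.coe_map, h1]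
          simp
        rw [h3] at h2
        exact (Set.singleton_eq_singleton_iff.mp h2.symm)
      have hsum : ∑ W ∈ A', pt (W.map e.symm.toAffineMap) = s0 := by
        rw [hs0]
        refine Finset.sum_bij (fun W _ => W.map e.symm.toAffineMap)
          (fun a ha => hbij.mapsTo ha) (fun a₁ ha₁ a₂ ha₂ hEq => hbij.injOn ha₁ ha₂ hEq)
          ?_ (fun a _ => rfl)
        intro b' hb'
        obtain ⟨a, ha, haeq⟩ := hbij.surjOn hb'
        exact ⟨a, ha, haeq⟩
      have hsum2 : ∑ W ∈ A', e.symm (pt W) = s0 := by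
        rw [← hsum]
        exact Finset.sum_congr rfl (fun W hW => (hptmap W hW).symm)
      have hes : ∀ y, h.2 (e.symm y) + h.1 = y := by
        intro y
        have h4 : aff h (e.symm y) = y := by rw [← he]; exact e.apply_symm_apply y
        exact h4
      have hs0eq : h.2 s0 + (N : ℝ) • h.1 = s0 := by
        have h5 : ∑ W ∈ A', (h.2 (e.symm (pt W)) + h.1) = ∑ W ∈ A', pt W :=
          Finset.sum_congr rfl fun W _ => hes (pt W)
        rw [Finset.sum_add_distrib, ← map_sum, hsum2, Finset.sum_const] at h5
        rw [← hs0] at h5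
        rwa [← Nat.cast_smul_eq_nsmul ℝ, ← hNdef] at h5
      have hNne : (N : ℝ) ≠ 0 := Nat.cast_ne_zero.mpr hNpos.ne'
      show aff h b = b
      have h2s0 : h.2 s0 = s0 - (N : ℝ) • h.1 := eq_sub_of_add_eq hs0eq
      rw [aff, hbdef, _root_.map_smul, h2s0, smul_sub, smul_smul, inv_mul_cancel₀ hNne, one_smul]
      abel
    have hCclosed : IsClosed {h : Hd d | aff h b = b} :=
      isClosed_eq (continuous_aff_left b) continuous_const
    have hCnull : μ {h : Hd d | aff h b = b}ᶜ = 0 := by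
      have := MeasureTheory.ae_iff.mp hfix
      simpa [Set.compl_setOf] using this
    obtain ⟨h, hhsupp, hhne⟩ := hnfp b
    exact hhne (msupp_subset_of_closed μ hCclosed hCnull hhsupp)
  · -- k ≥ 1: union of directions is an invariant family of proper nonzero subspaces
    set U : Set (Vd d) := ⋃ W ∈ A', ((W.direction : Submodule ℝ (Vd d)) : Set (Vd d)) with hUdef
    have hUclosed : IsClosed U :=
      Set.Finite.isClosed_biUnion A'.finite_toSet
        (fun W _ => W.direction.closed_of_finiteDimensional)
    have haeU : ∀ᵐ h ∂μ, ∀ x ∈ U, h.2 x ∈ U := by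
      filter_upwards [key] with h hh
      obtain ⟨e, he, hel, hbij⟩ := hh
      intro x hx
      obtain ⟨W, hWA, hxW⟩ := Set.mem_iUnion₂.mp hx
      obtain ⟨W'', hW''A, hW''eq⟩ := hbij.surjOn hWA
      have hxW' : x ∈ (W.direction : Set (Vd d)) := hxW
      have hxdir : x ∈ W.direction := hxW'
      rw [← hW''eq] at hxdir
      obtain ⟨w, hw, hweq⟩ := (mem_dir_map_symm e W'' x).mp hxdir
      have h6 : h.2 x = w := by
        rw [← hweq, ← hel]
        exact e.linear.apply_symm_apply w
      rw [h6]
      exact Set.mem_biUnion hW''A hw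
    set Cg : Set (Ld d) := {g : Ld d | ∀ x ∈ U, g x ∈ U} with hCgdef
    have hCgclosed : IsClosed Cg := by
      have hCgeq : Cg = ⋂ x ∈ U, (fun g : Ld d => g x) ⁻¹' U := by
        ext g
        simp [hCgdef]
      rw [hCgeq]
      refine isClosed_biInter fun x _ => hUclosed.preimage ?_
      exact isBoundedBilinearMap_apply.continuous.comp
        (continuous_id.prodMk continuous_const)
    have hmapnull : (μ.map Prod.snd) Cgᶜ = 0 := by
      rw [MeasureTheory.Measure.map_apply measurable_snd hCgclosed.measurableSet.compl]
      have h7 := MeasureTheory.ae_iff.mp haeU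
      have h8 : Prod.snd ⁻¹' Cgᶜ = {h : Hd d | ¬ ∀ x ∈ U, h.2 x ∈ U} := rfl
      rw [h8]
      exact h7
    have hsubC : suppSG (μ.map Prod.snd) ⊆ Cg := by
      have h1 : msupp (μ.map Prod.snd) ⊆ Cg :=
        msupp_subset_of_closed _ hCgclosed hmapnull
      have h2 : ((Subsemigroup.closure (msupp (μ.map Prod.snd)) : Subsemigroup (Ld d)) :
          Set (Ld d)) ⊆ Cg := by
        have hle : Subsemigroup.closure (msupp (μ.map Prod.snd)) ≤
            ⟨Cg, fun ha hb x hx => by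
              rw [ContinuousLinearMap.mul_apply]; exact ha _ (hb _ hx)⟩ :=
          Subsemigroup.closure_le.mpr h1
        exact hle
      exact closure_minimal h2 hCgclosed
    set Sd : Finset (Submodule ℝ (Vd d)) := A'.image (fun W => W.direction) with hSddef
    have hSdne : Sd.Nonempty := hA'ne.image _
    have hSdprop : ∀ D ∈ Sd, D ≠ ⊥ ∧ D ≠ ⊤ := by
      intro D hD
      obtain ⟨W, hWA, rfl⟩ := Finset.mem_image.mp hD
      obtain ⟨hPW, -⟩ := (hmemA' W).mp hWA
      constructor
      · intro hbot
        apply hk0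
        rw [← hPW.2.2, hbot]
        simp
      · intro htop
        apply hPW.1
        have h9 : W = ⊤ :=
          (AffineSubspace.direction_eq_top_iff_of_nonempty hPW.2.1).mp htop
        rw [h9]
        exact AffineSubspace.top_coe _ _ _
    obtain ⟨g, hgΓ, D, hDS, x, hxD, hall⟩ := hip.1 Sd hSdne hSdprop
    have hgC : g ∈ Cg := hsubC hgΓ
    have hxU : x ∈ U := by
      obtain ⟨W, hWA, hWeq⟩ := Finset.mem_image.mp hDS
      refine Set.mem_biUnion hWA ?_
      rw [hWeq]
      exact hxD
    have hgxU : g x ∈ U := hgC x hxU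
    obtain ⟨W', hW'A, hgxW'⟩ := Set.mem_iUnion₂.mp hgxU
    exact hall W'.direction (Finset.mem_image_of_mem _ hW'A) hgxW'

end AuxProof

noncomputable section

/-- Under condition `C`, the stationary law `η` has no atoms and gives
measure zero to every proper affine subspace of `V`. -/
theorem stationary_law_no_atoms_and_null_affine_subspaces
    {d : ℕ} (μ : Measure (Hd d)) (α : ℝ) (κ : ℝ → ℝ≥0∞)
    (hC : ConditionC d μ α κ)
    (η : Measure (Vd d)) (hη : IsAffStationary μ η)
    (huniq : ∀ η' : Measure (Vd d), IsAffStationary μ η' → η' = η) :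
    (∀ x : Vd d, η {x} = 0) ∧
    (∀ W : AffineSubspace ℝ (Vd d), (W : Set (Vd d)) ≠ Set.univ →
      η (W : Set (Vd d)) = 0) := by
  have main := eta_null_proper μ hC.prob hC.ip hC.ae_invertible hC.no_fixed_point η hη
  refine ⟨?_, main⟩
  intro x
  by_cases hd : d = 0
  · exfalso
    subst hd
    obtain ⟨h, -, hne⟩ := hC.no_fixed_point 0
    haveI : Subsingleton (Vd 0) := ⟨fun a b => by ext i; exact i.elim0⟩
    exact hne (Subsingleton.elim _ _)
  · haveI : Nontrivial (Vd d) := by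
      refine Module.nontrivial_of_finrank_pos (R := ℝ) (M := Vd d) ?_
      have hfr : Module.finrank ℝ (Vd d) = d := finrank_euclideanSpace_fin
      omega
    obtain ⟨y, hy⟩ := exists_ne x
    have h1 : ((AffineSubspace.mk' x (⊥ : Submodule ℝ (Vd d)) : AffineSubspace ℝ (Vd d)) :
        Set (Vd d)) = {x} := by
      ext z
      simp [AffineSubspace.mem_mk', sub_eq_zero]
    have h2 : ((AffineSubspace.mk' x (⊥ : Submodule ℝ (Vd d)) : AffineSubspace ℝ (Vd d)) :
        Set (Vd d)) ≠ Set.univ := by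
      rw [h1]
      intro hu
      have hyx : y ∈ ({x} : Set (Vd d)) := by rw [hu]; trivial
      exact hy (by simpa using hyx)
    have h3 := main _ h2
    rwa [h1] at h3


end
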